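/- Let M_1,…,M_s be perfect matchings of K_{2n} and let 1 ≤ x ≤ n. If s < (x!/2^x) · C(2n,x) · C(2n-x,x) / C(n,x)^2, then there exists a perfect matching M of K_{2n} such that for every i, M shares at most x-1 edges with M_i (i.e., |M ∩ M_i| ≤ x-1). -/

import Mathlib

open Finset

/-- A matching: a set of pairwise disjoint edges (2-element vertex sets). -/
def IsMatching {V : Type} [DecidableEq V] (M : Finset (Finset V)) : Prop :=
  (∀ e ∈ M, e.card = 2) ∧ (M : Set (Finset V)).Pairwise Disjoint

/-- A perfect matching of the complete graph on `V`: a matching covering every vertex. -/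
def IsPerfectMatching {V : Type} [DecidableEq V] (M : Finset (Finset V)) : Prop :=
  IsMatching M ∧ ∀ v : V, ∃ e ∈ M, v ∈ e
variable {α : Type} [DecidableEq α]

def pmSet (V : Finset α) : Finset (Finset (Finset α)) :=
  V.powerset.powerset.filter (fun M => (∀ e ∈ M, e.card = 2) ∧
    (∀ e ∈ M, ∀ f ∈ M, e ≠ f → Disjoint e f) ∧ M.biUnion id = V)

lemma mem_pmSet {V : Finset α} {M : Finset (Finset α)} :
    M ∈ pmSet V ↔ (∀ e ∈ M, e.card = 2) ∧
      (∀ e ∈ M, ∀ f ∈ M, e ≠ f → Disjoint e f) ∧ M.biUnion id = V := by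
  constructor
  · rintro h
    exact (mem_filter.1 h).2
  · intro h
    refine mem_filter.2 ⟨?_, h⟩
    rw [mem_powerset]
    intro e he
    rw [mem_powerset, ← h.2.2]
    exact subset_biUnion_of_mem id he

lemma pmSet_empty : pmSet (∅ : Finset α) = {∅} := by
  ext M
  rw [mem_pmSet, mem_singleton]
  constructor
  · rintro ⟨h2, -, hU⟩
    by_contra hne
    obtain ⟨e, he⟩ := nonempty_iff_ne_empty.2 hne
    have : e ⊆ ∅ := hU ▸ subset_biUnion_of_mem id he
    have := h2 e he
    simp [subset_empty.1 ‹e ⊆ ∅›] at this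
  · rintro rfl
    simp

lemma pmSet_decomp {V : Finset α} {v : α} (hv : v ∈ V) :
    pmSet V = (V.erase v).biUnion
      (fun w => (pmSet (V \ {v, w})).image (insert {v, w})) := by
  ext M
  simp only [mem_biUnion, mem_image, mem_erase]
  constructor
  · intro hM
    obtain ⟨h2, hd, hU⟩ := mem_pmSet.1 hM
    have hvU : v ∈ M.biUnion id := hU ▸ hv
    obtain ⟨e, he, hve⟩ := mem_biUnion.1 hvU
    obtain ⟨a, b, hab, rfl⟩ := card_eq_two.1 (h2 e he)
    -- wlog v = a
    have key : ∀ w : α, w ≠ v → ({v, w} : Finset α) ∈ M →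
        ∃ w', (w' ≠ v ∧ w' ∈ V) ∧ ∃ N ∈ pmSet (V \ {v, w'}), insert {v, w'} N = M := by
      intro w hw hmem
      refine ⟨w, ⟨hw, ?_⟩, M.erase {v, w}, ?_, ?_⟩
      · rw [← hU]; exact mem_biUnion.2 ⟨_, hmem, by simp⟩
      · rw [mem_pmSet]
        refine ⟨fun e he => h2 e (mem_of_mem_erase he),
          fun e he f hf hef => hd e (mem_of_mem_erase he) f (mem_of_mem_erase hf) hef, ?_⟩
        ext u
        simp only [mem_biUnion, mem_sdiff, id]
        constructor
        · rintro ⟨f, hf, huf⟩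
          have hfM := (mem_erase.1 hf).2
          have hfne := (mem_erase.1 hf).1
          refine ⟨hU ▸ mem_biUnion.2 ⟨f, hfM, huf⟩, fun hu => ?_⟩
          exact (disjoint_left.1 (hd f hfM _ hmem hfne)) huf hu
        · rintro ⟨huV, hu⟩
          obtain ⟨f, hfM, huf⟩ := mem_biUnion.1 (hU ▸ huV : u ∈ M.biUnion id)
          refine ⟨f, mem_erase.2 ⟨fun h => hu (h ▸ huf), hfM⟩, huf⟩
      · exact insert_erase hmem
    rcases mem_insert.1 hve with rfl | hvb
    · exact key b (Ne.symm hab) he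
    · have hvb' : v = b := mem_singleton.1 hvb
      subst hvb'
      rw [pair_comm a v] at he
      exact key a hab he
  · rintro ⟨w, ⟨hwv, hwV⟩, N, hN, rfl⟩
    obtain ⟨h2, hd, hU⟩ := mem_pmSet.1 hN
    have hvw : ({v, w} : Finset α).card = 2 := card_pair (Ne.symm hwv)
    have hdisj : ∀ e ∈ N, Disjoint ({v, w} : Finset α) e := by
      intro e he
      have heV : e ⊆ V \ {v, w} := by
        rw [← hU]; exact subset_biUnion_of_mem id he
      rw [disjoint_left]
      intro u hu hue
      exact (mem_sdiff.1 (heV hue)).2 hu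
    rw [mem_pmSet]
    refine ⟨?_, ?_, ?_⟩
    · intro e he
      rcases mem_insert.1 he with rfl | he'
      · exact hvw
      · exact h2 e he'
    · intro e he f hf hef
      rcases mem_insert.1 he with rfl | he' <;> rcases mem_insert.1 hf with rfl | hf'
      · exact absurd rfl hef
      · exact hdisj f hf'
      · exact (hdisj e he').symm
      · exact hd e he' f hf' hef
    · rw [biUnion_insert, hU]
      have : ({v, w} : Finset α) ⊆ V := by
        intro u hu; rcases mem_insert.1 hu with rfl | hu
        · exact hv
        · exact mem_singleton.1 hu ▸ hwV
      rw [id]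
      exact union_sdiff_of_subset this

lemma edge_subset_of_mem_pmSet {W : Finset α} {N : Finset (Finset α)} (hN : N ∈ pmSet W)
    {e : Finset α} (he : e ∈ N) : e ⊆ W := by
  rw [← (mem_pmSet.1 hN).2.2]
  exact subset_biUnion_of_mem id he

lemma pair_not_mem {V : Finset α} {v w : α} {N : Finset (Finset α)}
    (hN : N ∈ pmSet (V \ {v, w})) : ({v, w} : Finset α) ∉ N := by
  intro h
  have := edge_subset_of_mem_pmSet hN h (mem_insert_self v {w})
  simp at this

lemma pmSet_card_eq_sum {V : Finset α} {v : α} (hv : v ∈ V) :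
    (pmSet V).card = ∑ w ∈ V.erase v, (pmSet (V \ {v, w})).card := by
  rw [pmSet_decomp hv, card_biUnion]
  · refine Finset.sum_congr rfl (fun w _ => ?_)
    apply card_image_of_injOn
    intro N hN N' hN' hins
    have h1 := pair_not_mem (mem_coe.1 hN)
    have h2 := pair_not_mem (mem_coe.1 hN')
    have := congrArg (fun S => Finset.erase S {v, w}) hins
    simpa [erase_insert h1, erase_insert h2] using this
  · intro w hw w' hw' hne
    rw [Function.onFun, disjoint_left]
    rintro M hM hM'
    obtain ⟨N, hN, rfl⟩ := mem_image.1 hM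
    obtain ⟨N', hN', heq⟩ := mem_image.1 hM'
    have hwv : w ≠ v := (mem_erase.1 hw).1
    have hw'v : w' ≠ v := (mem_erase.1 hw').1
    have hpairne : ({v, w'} : Finset α) ≠ {v, w} := by
      intro h
      apply hne
      have : w' ∈ ({v, w} : Finset α) := h ▸ (mem_insert_of_mem (mem_singleton_self w'))
      rcases mem_insert.1 this with h' | h'
      · exact absurd h' hw'v
      · exact (mem_singleton.1 h').symm ▸ rfl
    have hmem : ({v, w'} : Finset α) ∈ N := by
      have : ({v, w'} : Finset α) ∈ insert {v, w} N := by
        rw [← heq]; exact mem_insert_self _ _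
      exact (mem_insert.1 this).resolve_left hpairne
    have := edge_subset_of_mem_pmSet hN hmem (mem_insert_self v {w'})
    simp at this

lemma pmSet_card : ∀ (m : ℕ) (V : Finset α), V.card = 2 * m →
    2 ^ m * m.factorial * (pmSet V).card = (2 * m).factorial := by
  intro m
  induction m with
  | zero =>
    intro V hV
    rw [card_eq_zero.1 hV, pmSet_empty]
    simp
  | succ m ih =>
    intro V hV
    have hpos : 0 < V.card := by omega
    obtain ⟨v, hv⟩ := card_pos.1 hpos
    rw [pmSet_card_eq_sum hv, Finset.mul_sum]
    have hstep : ∀ w ∈ V.erase v,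
        2 ^ (m + 1) * (m + 1).factorial * (pmSet (V \ {v, w})).card
          = 2 * (m + 1) * (2 * m).factorial := by
      intro w hw
      have hwv : w ≠ v := (mem_erase.1 hw).1
      have hwV : w ∈ V := (mem_erase.1 hw).2
      have hsub : ({v, w} : Finset α) ⊆ V := by
        intro u hu
        rcases mem_insert.1 hu with rfl | hu
        · exact hv
        · exact (mem_singleton.1 hu) ▸ hwV
      have hcard : (V \ {v, w}).card = 2 * m := by
        rw [card_sdiff_of_subset hsub, card_pair (Ne.symm hwv)]
        omega
      calc 2 ^ (m + 1) * (m + 1).factorial * (pmSet (V \ {v, w})).card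
          = 2 * (m + 1) * (2 ^ m * m.factorial * (pmSet (V \ {v, w})).card) := by
            rw [pow_succ, Nat.factorial_succ]; ring
        _ = 2 * (m + 1) * (2 * m).factorial := by rw [ih _ hcard]
    rw [Finset.sum_congr rfl hstep, Finset.sum_const, card_erase_of_mem hv, hV, smul_eq_mul]
    have hfac : (2 * (m + 1)).factorial = (2 * m + 2) * ((2 * m + 1) * (2 * m).factorial) := by
      rw [show 2 * (m + 1) = 2 * m + 1 + 1 by ring, Nat.factorial_succ, Nat.factorial_succ]
    rw [hfac]
    have : 2 * (m + 1) - 1 = 2 * m + 1 := by omega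
    rw [this]
    ring

lemma card_of_mem_pmSet {V : Finset α} {N : Finset (Finset α)} (hN : N ∈ pmSet V) :
    2 * N.card = V.card := by
  obtain ⟨h2, hd, hU⟩ := mem_pmSet.1 hN
  calc 2 * N.card = ∑ e ∈ N, (id e).card := by
        rw [Finset.sum_congr rfl (fun e he => by simpa using h2 e he), Finset.sum_const,
          smul_eq_mul]; ring
    _ = (N.biUnion id).card := (card_biUnion (fun e he f hf hef => hd e he f hf hef)).symm
    _ = V.card := by rw [hU]

lemma sdiff_mem_pmSet {V : Finset α} {N S : Finset (Finset α)} (hN : N ∈ pmSet V)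
    (hS : S ⊆ N) : N \ S ∈ pmSet (V \ S.biUnion id) := by
  obtain ⟨h2, hd, hU⟩ := mem_pmSet.1 hN
  rw [mem_pmSet]
  refine ⟨fun e he => h2 e (mem_sdiff.1 he).1,
    fun e he f hf hef => hd e (mem_sdiff.1 he).1 f (mem_sdiff.1 hf).1 hef, ?_⟩
  ext u
  simp only [mem_biUnion, mem_sdiff, id]
  constructor
  · rintro ⟨e, ⟨heN, heS⟩, hue⟩
    refine ⟨hU ▸ mem_biUnion.2 ⟨e, heN, hue⟩, ?_⟩
    rintro ⟨f, hfS, huf⟩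
    exact disjoint_left.1 (hd e heN f (hS hfS) (fun h => heS (h ▸ hfS))) hue huf
  · rintro ⟨huV, hu⟩
    obtain ⟨e, heN, hue⟩ := mem_biUnion.1 (hU ▸ huV : u ∈ N.biUnion id)
    exact ⟨e, ⟨heN, fun h => hu ⟨e, h, hue⟩⟩, hue⟩

theorem coveringRadiusBound (n x s : ℕ) (hx1 : 1 ≤ x) (hxn : x ≤ n)
    (M : Fin s → Finset (Finset (Fin (2*n)))) (hM : ∀ i, IsPerfectMatching (M i))
    (hs : (s : ℚ) < ((x.factorial : ℚ) / 2^x) * ((2*n).choose x) * ((2*n - x).choose x)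
            / ((n.choose x : ℚ))^2) :
    ∃ M₀ : Finset (Finset (Fin (2*n))), IsPerfectMatching M₀ ∧
      ∀ i, (M₀ ∩ M i).card ≤ x - 1 := by
  classical
  set V : Finset (Fin (2*n)) := Finset.univ with hVdef
  have hVcard : V.card = 2 * n := by simp [hVdef]
  -- perfect matchings ↔ pmSet univ
  have hiff : ∀ N : Finset (Finset (Fin (2*n))), IsPerfectMatching N ↔ N ∈ pmSet V := by
    intro N
    rw [mem_pmSet]
    constructor
    · rintro ⟨⟨h2, hd⟩, hcov⟩
      refine ⟨h2, fun e he f hf hef => hd he hf hef, ?_⟩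
      apply Finset.eq_univ_of_forall
      intro u
      obtain ⟨e, he, hue⟩ := hcov u
      exact mem_biUnion.2 ⟨e, he, hue⟩
    · rintro ⟨h2, hd, hU⟩
      refine ⟨⟨h2, fun e he f hf hef => hd e he f hf hef⟩, fun u => ?_⟩
      have : u ∈ N.biUnion id := hU ▸ mem_univ u
      obtain ⟨e, he, hue⟩ := mem_biUnion.1 this
      exact ⟨e, he, hue⟩
  set T := pmSet V with hT
  -- counts
  have hfull : 2 ^ n * n.factorial * T.card = (2 * n).factorial := pmSet_card n V hVcard
  set K := (2 * (n - x)).factorial / (2 ^ (n - x) * (n - x).factorial) with hK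
  have hKmul : ∀ W : Finset (Fin (2*n)), W.card = 2 * (n - x) → (pmSet W).card = K := by
    intro W hW
    have h := pmSet_card (n - x) W hW
    have := Nat.div_eq_of_eq_mul_left
      (show 0 < 2 ^ (n - x) * (n - x).factorial by positivity) (show (2 * (n - x)).factorial = (pmSet W).card * (2 ^ (n - x) * (n - x).factorial) by rw [← h]; ring)
    rw [hK]
    exact this.symm
  have hKid : 2 ^ (n - x) * (n - x).factorial * K = (2 * (n - x)).factorial := by
    obtain ⟨W, -, hWcard⟩ := Finset.exists_subset_card_eq (s := V) (n := 2 * (n - x)) (by omega)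
    rw [← hKmul W hWcard]
    exact pmSet_card (n - x) W hWcard
  
  have hMcard : ∀ i, (M i).card = n := by
    intro i
    have := card_of_mem_pmSet ((hiff (M i)).1 (hM i))
    rw [hVcard] at this
    omega
  set B := T.filter (fun M₀ => ∃ i, x ≤ (M₀ ∩ M i).card) with hB
  have hBsub : B ⊆ (Finset.univ : Finset (Fin s)).biUnion (fun i =>
      ((M i).powersetCard x).biUnion (fun S => T.filter (fun M₀ => S ⊆ M₀))) := by
    intro M₀ hM₀
    obtain ⟨hM₀T, i, hix⟩ := mem_filter.1 hM₀
    obtain ⟨S, hSsub, hScard⟩ := Finset.exists_subset_card_eq hix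
    refine mem_biUnion.2 ⟨i, mem_univ i, mem_biUnion.2 ⟨S, ?_,
      mem_filter.2 ⟨hM₀T, hSsub.trans inter_subset_left⟩⟩⟩
    exact mem_powersetCard.2 ⟨hSsub.trans inter_subset_right, hScard⟩
  have hfilter : ∀ i, ∀ S ∈ (M i).powersetCard x,
      (T.filter (fun M₀ => S ⊆ M₀)).card ≤ K := by
    intro i S hS
    obtain ⟨hSM, hScard⟩ := mem_powersetCard.1 hS
    have hSdisj : ∀ e ∈ S, ∀ f ∈ S, e ≠ f → Disjoint e f := by
      intro e he f hf hef
      exact (hM i).1.2 (hSM he) (hSM hf) hef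
    have hS2 : ∀ e ∈ S, e.card = 2 := fun e he => (hM i).1.1 e (hSM he)
    have hUcard : (S.biUnion id).card = 2 * x := by
      have h1 : (S.biUnion id).card = ∑ e ∈ S, (id e).card := card_biUnion hSdisj
      rw [h1, Finset.sum_congr rfl (fun e he => by simpa using hS2 e he), Finset.sum_const,
        hScard, smul_eq_mul]
      ring
    have hcompl : (V \ S.biUnion id).card = 2 * (n - x) := by
      rw [card_sdiff_of_subset (by rw [hVdef]; exact subset_univ _), hVcard, hUcard]
      omega
    rw [← hKmul _ hcompl]
    apply Finset.card_le_card_of_injOn (fun M₀ => M₀ \ S)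
    · intro M₀ hM₀
      obtain ⟨hM₀T, hSsub⟩ := mem_filter.1 hM₀
      exact sdiff_mem_pmSet hM₀T hSsub
    · intro a ha b hb hab
      have hSa := (mem_filter.1 (mem_coe.1 ha)).2
      have hSb := (mem_filter.1 (mem_coe.1 hb)).2
      have h2 : a \ S ∪ S = b \ S ∪ S := by rw [show a \ S = b \ S from hab]
      rwa [sdiff_union_of_subset hSa, sdiff_union_of_subset hSb] at h2
  have hBcard : B.card ≤ s * (n.choose x * K) := by
    calc B.card ≤ _ := card_le_card hBsub
      _ ≤ ∑ i : Fin s, (((M i).powersetCard x).biUnion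
            fun S => T.filter (fun M₀ => S ⊆ M₀)).card := card_biUnion_le
      _ ≤ ∑ _i : Fin s, (n.choose x * K) := by
          apply Finset.sum_le_sum
          intro i _
          calc _ ≤ ∑ S ∈ (M i).powersetCard x, (T.filter (fun M₀ => S ⊆ M₀)).card :=
                card_biUnion_le
            _ ≤ ∑ _S ∈ (M i).powersetCard x, K :=
                Finset.sum_le_sum (fun S hS => hfilter i S hS)
            _ = n.choose x * K := by
                rw [Finset.sum_const, card_powersetCard, hMcard i, smul_eq_mul]
      _ = s * (n.choose x * K) := by
          rw [Finset.sum_const, card_univ, Fintype.card_fin, smul_eq_mul]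
  -- the numeric inequality
  have hKpos : 0 < K := by
    rcases Nat.eq_zero_or_pos K with h | h
    · exfalso
      have := hKid
      rw [h, mul_zero] at this
      exact absurd this.symm (Nat.factorial_ne_zero _)
    · exact h
  have hchoosepos : 0 < n.choose x := Nat.choose_pos hxn
  have hlt : s * (n.choose x * K) < T.card := by
    have hfullQ : ((2:ℚ) ^ n * n.factorial) * T.card = (2 * n).factorial := by
      exact_mod_cast hfull
    have hKQ : ((2:ℚ) ^ (n - x) * (n - x).factorial) * K = (2 * (n - x)).factorial := by
      exact_mod_cast hKid
    have hTQ : (T.card : ℚ) = (2 * n).factorial / (2 ^ n * n.factorial) := by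
      rw [eq_div_iff (by positivity)]
      linarith [hfullQ]
    have hKQ' : (K : ℚ) = (2 * (n - x)).factorial / (2 ^ (n - x) * (n - x).factorial) := by
      rw [eq_div_iff (by positivity)]
      linarith [hKQ]
    have hc1 : (((2 * n).choose x : ℚ)) = (2 * n).factorial / (x.factorial * (2 * n - x).factorial) :=
      Nat.cast_choose ℚ (by omega)
    have hc2 : (((2 * n - x).choose x : ℚ))
        = (2 * n - x).factorial / (x.factorial * (2 * (n - x)).factorial) := by
      have h := Nat.cast_choose ℚ (show x ≤ 2 * n - x by omega)
      rw [show 2 * n - x - x = 2 * (n - x) by omega] at h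
      exact h
    have hc3 : ((n.choose x : ℚ)) = n.factorial / (x.factorial * (n - x).factorial) :=
      Nat.cast_choose ℚ hxn
    have hpow : ((2:ℚ)) ^ n = 2 ^ x * 2 ^ (n - x) := by
      rw [← pow_add]
      congr 1
      omega
    have hfx : (x.factorial : ℚ) ≠ 0 := Nat.cast_ne_zero.2 (Nat.factorial_ne_zero _)
    have hfnx : ((n - x).factorial : ℚ) ≠ 0 := Nat.cast_ne_zero.2 (Nat.factorial_ne_zero _)
    have hfn : (n.factorial : ℚ) ≠ 0 := Nat.cast_ne_zero.2 (Nat.factorial_ne_zero _)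
    have hf2nx : ((2 * n - x).factorial : ℚ) ≠ 0 := Nat.cast_ne_zero.2 (Nat.factorial_ne_zero _)
    have hf2nx2 : ((2 * (n - x)).factorial : ℚ) ≠ 0 := Nat.cast_ne_zero.2 (Nat.factorial_ne_zero _)
    have hf2n : ((2 * n).factorial : ℚ) ≠ 0 := Nat.cast_ne_zero.2 (Nat.factorial_ne_zero _)
    have hA : ((x.factorial : ℚ) / 2^x) * ((2*n).choose x) * ((2*n - x).choose x)
        / ((n.choose x : ℚ))^2 * ((n.choose x : ℚ) * K) = T.card := by
      rw [hc1, hc2, hc3, hTQ, hKQ', hpow]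
      field_simp
    have hCKpos : (0:ℚ) < (n.choose x : ℚ) * K := by
      have h1 : (0:ℚ) < (n.choose x : ℚ) := by exact_mod_cast hchoosepos
      have h2 : (0:ℚ) < (K : ℚ) := by exact_mod_cast hKpos
      positivity
    have : (s : ℚ) * ((n.choose x : ℚ) * K) < T.card := by
      rw [← hA]
      exact mul_lt_mul_of_pos_right hs hCKpos
    exact_mod_cast this
  have hex : ∃ M₀ ∈ T, M₀ ∉ B := by
    by_contra h
    push_neg at h
    have hsub : T ⊆ B := fun N hN => h N hN
    have := card_le_card hsub
    omega
  obtain ⟨M₀, hM₀T, hM₀B⟩ := hex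
  refine ⟨M₀, (hiff M₀).2 hM₀T, fun i => ?_⟩
  by_contra hcon
  exact hM₀B (mem_filter.2 ⟨hM₀T, i, by omega⟩)
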